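/- Every cm-monoid of type 2 is noncommutative (its multiplicative monoid is not commutative). -/
import Mathlib


universe u

open scoped Classical

/-- A finite permutation of ω: an element of S_ω, i.e. a permutation moving
only finitely many points. -/
def FinPerm (σ : Equiv.Perm ℕ) : Prop := {n : ℕ | σ n ≠ n}.Finite

/-- The raw operations of a merge algebra: the binary merges `⋆_n` and the
actions `σ̄` of (finite) permutations. -/
structure MergeOps (A : Type u) where
  star : ℕ → A → A → A
  bar : Equiv.Perm ℕ → A → A

namespace MergeOps

variable {A : Type u}

/-- `chain g k = ((g 0 ⋆_1 g 1) ⋆_2 g 2) … ⋆_k (g k)`. -/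
def chain (M : MergeOps A) (g : ℕ → A) : ℕ → A
  | 0 => g 0
  | i + 1 => M.star (i + 1) (M.chain g i) (g (i + 1))

/-- `chainStar g k y = ((…(g 0 ⋆_1 g 1) ⋆_2 …) ⋆_{k-1} g (k-1)) ⋆_k y`. -/
def chainStar (M : MergeOps A) (g : ℕ → A) (k : ℕ) (y : A) : A :=
  match k with
  | 0 => y
  | k + 1 => M.star (k + 1) (M.chain g k) y

/-- The `n`-coordinate of `x` relative to the coordinator `pt`:
`x[n] = τ̄^n_0(x) ⋆_1 pt`. -/
def coord (M : MergeOps A) (pt x : A) (n : ℕ) : A :=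
  M.star 1 (M.bar (Equiv.swap 0 n) x) pt

end MergeOps

/-- A merge algebra: operations `⋆_n` and `σ̄` satisfying axioms (B1)–(B7). -/
structure MergeAlgebra (A : Type u) extends MergeOps A where
  /-- (B1) each `⋆_n` is associative -/
  star_assoc : ∀ (n : ℕ) (x y z : A), star n (star n x y) z = star n x (star n y z)
  /-- (B1) each `⋆_n` is idempotent -/
  star_idem : ∀ (n : ℕ) (x : A), star n x x = x
  /-- (B2) -/
  star_zero : ∀ x y : A, star 0 x y = y
  /-- (B3), first part (k ≥ n) -/
  B3a : ∀ {n k : ℕ}, n ≤ k → ∀ x y z : A, star n (star k x y) z = star n x z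
  /-- (B3), second part (k ≥ n) -/
  B3b : ∀ {n k : ℕ}, n ≤ k → ∀ x y z : A, star k x (star n y z) = star k x z
  /-- (B4) (k < n) -/
  B4 : ∀ {n k : ℕ}, k < n → ∀ x y z : A, star n (star k x y) z = star k x (star n y z)
  /-- (B5) `σ̄(τ̄(x)) = (τ∘σ)‾(x)` -/
  B5 : ∀ σ τ : Equiv.Perm ℕ, FinPerm σ → FinPerm τ → ∀ x : A,
      bar σ (bar τ x) = bar (τ * σ) x
  /-- (B5) `ῑ(x) = x` -/
  bar_id : ∀ x : A, bar 1 x = x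
  /-- (B6): for `n ≤ k` and `σ` a permutation of `k`, with `f i = x` iff `σ i < n`:
  `σ̄(x ⋆_n y) = ((…(σ̄(f 0) ⋆_1 σ̄(f 1)) ⋆_2 …) ⋆_{k-1} σ̄(f (k-1))) ⋆_k y`. -/
  B6 : ∀ {n k : ℕ}, n ≤ k → ∀ σ : Equiv.Perm ℕ, (∀ i, k ≤ i → σ i = i) →
      ∀ x y : A, bar σ (star n x y) =
        toMergeOps.chainStar (fun i => bar σ (if σ i < n then x else y)) k y
  /-- (B7) -/
  B7 : ∀ {m n : ℕ} (σ τ : Equiv.Perm ℕ), FinPerm σ → FinPerm τ →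
      (∀ i, m ≤ i → i < n → σ i = τ i) →
      ∀ x y z : A, star n (star m z (bar σ x)) y = star n (star m z (bar τ x)) y

/-- An m-monoid: a monoid structure together with a merge algebra structure on
the same carrier, satisfying right distributivity (L1). -/
structure MMonoid (A : Type u) extends MergeAlgebra A where
  mul : A → A → A
  one : A
  mul_assoc : ∀ x y z : A, mul (mul x y) z = mul x (mul y z)
  one_mul : ∀ x : A, mul one x = x
  mul_one : ∀ x : A, mul x one = x
  /-- (L1) right distributivity -/
  L1 : ∀ (n : ℕ) (x y z : A), mul (star n x y) z = star n (mul x z) (mul y z)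

namespace MMonoid

variable {A : Type u} (M : MMonoid A)

/-- A cm-monoid is an m-monoid satisfying (L2): `σ̄(x)·y = σ̄(x·y)`. -/
def IsCM : Prop :=
  ∀ σ : Equiv.Perm ℕ, FinPerm σ → ∀ x y : A, M.mul (M.bar σ x) y = M.bar σ (M.mul x y)

/-- An am-monoid is an m-monoid satisfying (L3): `σ̄(x·y) = σ̄(x)·σ̄(y)`. -/
def IsAM : Prop :=
  ∀ σ : Equiv.Perm ℕ, FinPerm σ → ∀ x y : A, M.bar σ (M.mul x y) = M.mul (M.bar σ x) (M.bar σ y)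

/-- The `n`-coordinate `x[n] = τ̄^n_0(x) ⋆_1 1` (the coordinator is the unit). -/
def coord (x : A) (n : ℕ) : A := M.toMergeOps.coord M.one x n

/-- Extensionality: elements with the same coordinates are equal. -/
def Extensional : Prop := ∀ x y : A, (∀ n : ℕ, M.coord x n = M.coord y n) → x = y

/-- An element has rank ≤ n iff `x ⋆_n 1 = x`; the m-monoid is finitely ranked
if every element has finite rank. -/
def FinitelyRanked : Prop := ∀ x : A, ∃ n : ℕ, M.star n x M.one = x

/-- A degenerate m-monoid. -/
def Degenerate : Prop :=
  (∀ σ : Equiv.Perm ℕ, FinPerm σ → ∀ x : A, M.bar σ x = x) ∧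
    (∀ (n : ℕ) (x y : A), M.star n x y = y)

/-- `a` is finite dimensional: for every `n` there is `m` with
`(a·(1 ⋆_m b ⋆_{m+k} 1)) ⋆_n a = a` for all `b` and `k`. -/
def FinDimEl (a : A) : Prop :=
  ∀ n : ℕ, ∃ m : ℕ, ∀ (b : A) (k : ℕ),
    M.star n (M.mul a (M.star (m + k) (M.star m M.one b) M.one)) a = a

/-- `a` is ω-finite dimensional: for every `n` there is `m` with
`(a·(1 ⋆_m b)) ⋆_n a = a` for all `b`. -/
def OmegaFinDimEl (a : A) : Prop :=
  ∀ n : ℕ, ∃ m : ℕ, ∀ b : A,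
    M.star n (M.mul a (M.star m M.one b)) a = a

/-- An m-monoid is finite dimensional if every element is. -/
def FinDim : Prop := ∀ a : A, M.FinDimEl a

/-- An m-monoid is ω-finite dimensional if every element is. -/
def OmegaFinDim : Prop := ∀ a : A, M.OmegaFinDimEl a

end MMonoid

/-- STATEMENT 10: every cm-monoid of type 2 is noncommutative. -/
theorem cm_type2_noncommutative {A : Type u} (M : MMonoid A) (hcm : M.IsCM)
    (h2 : ∀ k j : ℕ, k ≠ j → M.coord M.one k ≠ M.coord M.one j) :
    ¬ ∀ x y : A, M.mul x y = M.mul y x := by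
  intro hcomm
  -- swaps and products of finite permutations are finite
  have hswap : ∀ a b : ℕ, FinPerm (Equiv.swap a b) := by
    intro a b
    apply Set.Finite.subset ((Set.finite_singleton b).insert a)
    intro n hn
    by_contra h
    simp only [Set.mem_insert_iff, Set.mem_singleton_iff] at h
    push_neg at h
    exact hn (Equiv.swap_apply_of_ne_of_ne h.1 h.2)
  have hmulfin : ∀ σ τ : Equiv.Perm ℕ, FinPerm σ → FinPerm τ → FinPerm (σ * τ) := by
    intro σ τ hσ hτ
    apply Set.Finite.subset (hσ.union hτ)
    intro n hn
    simp only [Set.mem_union, Set.mem_setOf_eq]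
    by_contra h
    push_neg at h
    exact hn (by simp [Equiv.Perm.mul_apply, h.2, h.1])
  set e : Equiv.Perm ℕ → A := fun σ => M.bar σ M.one with he
  have key : ∀ σ τ : Equiv.Perm ℕ, FinPerm σ → FinPerm τ →
      M.mul (e σ) (e τ) = e (τ * σ) := by
    intro σ τ hσ hτ
    have h1 := hcm σ hσ M.one (e τ)
    rw [M.one_mul] at h1
    rw [he]
    simp only
    rw [h1, M.B5 σ τ hσ hτ]
  have s2eq : e (Equiv.swap 0 1) = e (Equiv.swap 0 2) := by
    have hconj : (Equiv.swap 0 2 : Equiv.Perm ℕ)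
        = Equiv.swap 1 2 * (Equiv.swap 0 1 * Equiv.swap 1 2) := by
      have h := Equiv.swap_apply_apply (Equiv.swap 1 2 : Equiv.Perm ℕ) 0 1
      simp only [Equiv.swap_apply_of_ne_of_ne (by norm_num : (0:ℕ) ≠ 1) (by norm_num : (0:ℕ) ≠ 2),
        Equiv.swap_apply_left, Equiv.swap_inv] at h
      rw [h, mul_assoc]
    have h1 : M.mul (e (Equiv.swap 0 1 * Equiv.swap 1 2)) (e (Equiv.swap 1 2))
        = e (Equiv.swap 0 2) := by
      rw [key _ _ (hmulfin _ _ (hswap 0 1) (hswap 1 2)) (hswap 1 2), ← hconj]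
    have h2 : e (Equiv.swap 0 1 * Equiv.swap 1 2)
        = M.mul (e (Equiv.swap 1 2)) (e (Equiv.swap 0 1)) := by
      rw [key _ _ (hswap 1 2) (hswap 0 1)]
    rw [h2] at h1
    rw [hcomm] at h1
    rw [← M.mul_assoc] at h1
    rw [key _ _ (hswap 1 2) (hswap 1 2)] at h1
    have : (Equiv.swap 1 2 * Equiv.swap 1 2 : Equiv.Perm ℕ) = 1 := by
      simp [Equiv.swap_mul_self]
    rw [this] at h1
    have hone : e (1 : Equiv.Perm ℕ) = M.one := M.bar_id M.one
    rw [hone, M.one_mul] at h1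
    exact h1
  have : M.coord M.one 1 = M.coord M.one 2 := by
    show M.star 1 (M.bar (Equiv.swap 0 1) M.one) M.one
      = M.star 1 (M.bar (Equiv.swap 0 2) M.one) M.one
    rw [show M.bar (Equiv.swap 0 1) M.one = e (Equiv.swap 0 1) from rfl, s2eq]
  exact h2 1 2 (by norm_num) this
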